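/- Let L be a simple right Leibniz algebra over a field k such that ⟨L^ann, L⟩ ≠ 0. Then L is linear: there exist an associative k-algebra A with submodules A₀, A₁ making A a special Z₂-graded associative algebra, and an injective k-linear map φ : L → A satisfying φ(⟨x,y⟩) = φ(x)·π₀(φ(y)) − π₀(φ(y))·φ(x) for all x, y ∈ L. (Proposition 1.2) -/

import Mathlib

universe u v

/-- A special ℤ₂-graded associative algebra over a field `k`: an associative
`k`-algebra which is the internal direct sum of submodules A₀ ⊕ A₁ with
A₀A₀ ⊆ A₀, A₀A₁ + A₁A₀ ⊆ A₁ and A₁A₁ = 0, together with the projection π₀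
onto A₀ along A₁. -/
structure SpecialZ2GradedAlgebra (k : Type u) [Field k] : Type (max u (v + 1)) where
  carrier : Type v
  [instRing : Ring carrier]
  [instAlgebra : Algebra k carrier]
  A₀ : Submodule k carrier
  A₁ : Submodule k carrier
  sup_eq : A₀ ⊔ A₁ = ⊤
  inf_eq : A₀ ⊓ A₁ = ⊥
  mul_mem₀₀ : ∀ a ∈ A₀, ∀ b ∈ A₀, a * b ∈ A₀
  mul_mem₀₁ : ∀ a ∈ A₀, ∀ b ∈ A₁, a * b ∈ A₁
  mul_mem₁₀ : ∀ a ∈ A₁, ∀ b ∈ A₀, a * b ∈ A₁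
  mul_eq_zero₁₁ : ∀ a ∈ A₁, ∀ b ∈ A₁, a * b = 0
  π₀ : carrier →ₗ[k] carrier
  π₀_mem : ∀ x : carrier, π₀ x ∈ A₀
  sub_π₀_mem : ∀ x : carrier, x - π₀ x ∈ A₁

attribute [instance] SpecialZ2GradedAlgebra.instRing SpecialZ2GradedAlgebra.instAlgebra

/-! ### Auxiliary construction

We realise any right Leibniz algebra `L` (with bracket `br`) inside the special
ℤ₂-graded algebra `C = (E × E) ⊕ (E × E)` where `E = End k L`, with
multiplication `x * y = (y₁ * x₁, y₁ * x₂ + y₂ * x₁)` (dual numbers over the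
opposite of `E × E`).  The embedding is `x ↦ ((Rₓ, Rₓ), (Lₓ, Rₓ))` where
`Rₓ = br · x` and `Lₓ = br x ·`; injectivity uses simplicity of `L`. -/

variable {k : Type u} {L : Type v} [Field k] [AddCommGroup L] [Module k L]

/-- carrier of the auxiliary special ℤ₂-graded algebra -/
def AuxC (k : Type u) (L : Type v) [Field k] [AddCommGroup L] [Module k L] : Type v :=
  (Module.End k L × Module.End k L) × (Module.End k L × Module.End k L)

namespace AuxC

instance : AddCommGroup (AuxC k L) :=
  inferInstanceAs (AddCommGroup ((Module.End k L × Module.End k L) × (Module.End k L × Module.End k L)))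

instance : Module k (AuxC k L) :=
  inferInstanceAs (Module k ((Module.End k L × Module.End k L) × (Module.End k L × Module.End k L)))

instance : Ring (AuxC k L) :=
  { (inferInstance : AddCommGroup (AuxC k L)) with
    mul := fun x y => (y.1 * x.1, y.1 * x.2 + y.2 * x.1)
    one := ((1, 0) : (Module.End k L × Module.End k L) × (Module.End k L × Module.End k L))
    mul_assoc := by
      intro x y z
      refine Prod.ext ?_ ?_
      · show z.1 * (y.1 * x.1) = (z.1 * y.1) * x.1
        rw [mul_assoc]
      · show z.1 * (y.1 * x.2 + y.2 * x.1) + z.2 * (y.1 * x.1)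
          = (z.1 * y.1) * x.2 + (z.1 * y.2 + z.2 * y.1) * x.1
        simp [mul_add, add_mul, mul_assoc]; abel
    one_mul := by
      intro x
      refine Prod.ext ?_ ?_
      · show x.1 * 1 = x.1; rw [mul_one]
      · show x.1 * 0 + x.2 * 1 = x.2; simp
    mul_one := by
      intro x
      refine Prod.ext ?_ ?_
      · show (1 : Module.End k L × Module.End k L) * x.1 = x.1; rw [one_mul]
      · show (1 : Module.End k L × Module.End k L) * x.2 + 0 * x.1 = x.2; simp
    left_distrib := by
      intro x y z
      refine Prod.ext ?_ ?_
      · show (y.1 + z.1) * x.1 = y.1 * x.1 + z.1 * x.1; rw [add_mul]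
      · show (y.1 + z.1) * x.2 + (y.2 + z.2) * x.1
          = (y.1 * x.2 + y.2 * x.1) + (z.1 * x.2 + z.2 * x.1)
        simp [add_mul]; abel
    right_distrib := by
      intro x y z
      refine Prod.ext ?_ ?_
      · show z.1 * (x.1 + y.1) = z.1 * x.1 + z.1 * y.1; rw [mul_add]
      · show z.1 * (x.2 + y.2) + z.2 * (x.1 + y.1)
          = (z.1 * x.2 + z.2 * x.1) + (z.1 * y.2 + z.2 * y.1)
        simp [mul_add]; abel
    zero_mul := by
      intro x
      refine Prod.ext ?_ ?_
      · show x.1 * 0 = 0; rw [mul_zero]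
      · show x.1 * 0 + x.2 * 0 = 0; simp
    mul_zero := by
      intro x
      refine Prod.ext ?_ ?_
      · show (0 : Module.End k L × Module.End k L) * x.1 = 0; rw [zero_mul]
      · show (0 : Module.End k L × Module.End k L) * x.2 + 0 * x.1 = 0; simp }

lemma mul_def (x y : AuxC k L) : x * y = (y.1 * x.1, y.1 * x.2 + y.2 * x.1) := rfl

instance : Algebra k (AuxC k L) :=
  Algebra.ofModule
    (fun r x y => by
      refine Prod.ext ?_ ?_
      · show y.1 * (r • x.1) = r • (y.1 * x.1); rw [mul_smul_comm]
      · show y.1 * (r • x.2) + y.2 * (r • x.1) = r • (y.1 * x.2 + y.2 * x.1)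
        simp [mul_smul_comm, smul_add])
    (fun r x y => by
      refine Prod.ext ?_ ?_
      · show (r • y.1) * x.1 = r • (y.1 * x.1); rw [smul_mul_assoc]
      · show (r • y.1) * x.2 + (r • y.2) * x.1 = r • (y.1 * x.2 + y.2 * x.1)
        simp [smul_mul_assoc, smul_add])

/-- A₀ : elements with second component 0. -/
def A0 (k : Type u) (L : Type v) [Field k] [AddCommGroup L] [Module k L] :
    Submodule k (AuxC k L) where
  carrier := {x | x.2 = 0}
  add_mem' := by
    intro a b ha hb
    show (a + b).2 = 0
    have : (a + b).2 = a.2 + b.2 := rfl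
    rw [this, ha, hb, add_zero]
  zero_mem' := rfl
  smul_mem' := by
    intro c a ha
    show (c • a).2 = 0
    have : (c • a).2 = c • a.2 := rfl
    rw [this, ha, smul_zero]

/-- A₁ : elements with first component 0. -/
def A1 (k : Type u) (L : Type v) [Field k] [AddCommGroup L] [Module k L] :
    Submodule k (AuxC k L) where
  carrier := {x | x.1 = 0}
  add_mem' := by
    intro a b ha hb
    show (a + b).1 = 0
    have : (a + b).1 = a.1 + b.1 := rfl
    rw [this, ha, hb, add_zero]
  zero_mem' := rfl
  smul_mem' := by
    intro c a ha
    show (c • a).1 = 0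
    have : (c • a).1 = c • a.1 := rfl
    rw [this, ha, smul_zero]

lemma mem_A0 (x : AuxC k L) : x ∈ A0 k L ↔ x.2 = 0 := Iff.rfl
lemma mem_A1 (x : AuxC k L) : x ∈ A1 k L ↔ x.1 = 0 := Iff.rfl

/-- projection onto A₀ along A₁ -/
def proj0 (k : Type u) (L : Type v) [Field k] [AddCommGroup L] [Module k L] :
    AuxC k L →ₗ[k] AuxC k L where
  toFun x := (x.1, 0)
  map_add' a b := by
    refine Prod.ext ?_ ?_
    · show (a + b).1 = a.1 + b.1; rfl
    · show (0 : _) = 0 + 0; rw [add_zero]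
  map_smul' c a := by
    refine Prod.ext ?_ ?_
    · show (c • a).1 = c • a.1; rfl
    · show (0 : _) = c • 0; rw [smul_zero]

/-- the embedding of `L` -/
def phi (br : L →ₗ[k] L →ₗ[k] L) : L →ₗ[k] AuxC k L where
  toFun x := ((br.flip x, br.flip x), (br x, br.flip x))
  map_add' a b := by
    refine Prod.ext (Prod.ext ?_ ?_) (Prod.ext ?_ ?_) <;> simp <;> rfl
  map_smul' c a := by
    refine Prod.ext (Prod.ext ?_ ?_) (Prod.ext ?_ ?_) <;> simp <;> rfl

/-- the auxiliary special ℤ₂-graded algebra -/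
def toSpecial (k : Type u) (L : Type v) [Field k] [AddCommGroup L] [Module k L] :
    SpecialZ2GradedAlgebra.{u, v} k where
  carrier := AuxC k L
  A₀ := A0 k L
  A₁ := A1 k L
  sup_eq := by
    rw [eq_top_iff]
    intro x _
    refine Submodule.mem_sup.mpr ⟨(x.1, 0), rfl, (0, x.2), rfl, ?_⟩
    refine Prod.ext ?_ ?_
    · show x.1 + 0 = x.1; rw [add_zero]
    · show 0 + x.2 = x.2; rw [zero_add]
  inf_eq := by
    rw [eq_bot_iff]
    intro x hx
    have h0 : x.2 = 0 := hx.1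
    have h1 : x.1 = 0 := hx.2
    show x = 0
    exact Prod.ext h1 h0
  mul_mem₀₀ := by
    intro a ha b hb
    rw [mem_A0] at ha hb ⊢
    rw [mul_def]
    show b.1 * a.2 + b.2 * a.1 = 0
    rw [ha, hb, mul_zero, zero_mul, add_zero]
  mul_mem₀₁ := by
    intro a ha b hb
    rw [mem_A0] at ha
    rw [mem_A1] at hb ⊢
    rw [mul_def]
    show b.1 * a.1 = 0
    rw [hb, zero_mul]
  mul_mem₁₀ := by
    intro a ha b hb
    rw [mem_A1] at ha ⊢
    rw [mul_def]
    show b.1 * a.1 = 0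
    rw [ha, mul_zero]
  mul_eq_zero₁₁ := by
    intro a ha b hb
    rw [mem_A1] at ha hb
    rw [mul_def]
    refine Prod.ext ?_ ?_
    · show b.1 * a.1 = 0; rw [ha, mul_zero]
    · show b.1 * a.2 + b.2 * a.1 = 0; rw [hb, ha, zero_mul, mul_zero, add_zero]
  π₀ := proj0 k L
  π₀_mem := fun x => rfl
  sub_π₀_mem := by
    intro x
    rw [mem_A1]
    show x.1 - x.1 = 0
    rw [sub_self]

end AuxC

/-- Proposition 1.2: a simple right Leibniz algebra L with ⟨L^ann, L⟩ ≠ 0 is linear,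
i.e. it embeds into the Leibniz algebra of a special ℤ₂-graded associative algebra
with bracket ⟨a,b⟩ = a·π₀(b) − π₀(b)·a. -/
theorem simple_leibniz_is_linear {k : Type u} {L : Type v} [Field k]
    [AddCommGroup L] [Module k L]
    (br : L →ₗ[k] L →ₗ[k] L)
    (leib : ∀ x y z : L, br (br x y) z = br x (br y z) + br (br x z) y)
    (hann_ne : Submodule.span k {z : L | ∃ w : L, z = br w w} ≠ ⊥)
    (hsimple : ∀ I : Submodule k L,
      (∀ a ∈ I, ∀ z : L, br a z ∈ I ∧ br z a ∈ I) →
        I = ⊥ ∨ I = Submodule.span k {z : L | ∃ w : L, z = br w w} ∨ I = ⊤)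
    (hbr_ne : ∃ a ∈ Submodule.span k {z : L | ∃ w : L, z = br w w}, ∃ z : L, br a z ≠ 0) :
    ∃ (S : SpecialZ2GradedAlgebra.{u, v} k) (φ : L →ₗ[k] S.carrier),
      Function.Injective φ
        ∧ ∀ x y : L, φ (br x y) = φ x * S.π₀ (φ y) - S.π₀ (φ y) * φ x := by
  classical
  -- injectivity of `phi br`, using simplicity
  set I : Submodule k L := LinearMap.ker br ⊓ LinearMap.ker br.flip with hI
  have hIdeal : ∀ a ∈ I, ∀ z : L, br a z ∈ I ∧ br z a ∈ I := by
    intro a ha z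
    obtain ⟨h1, h2⟩ := Submodule.mem_inf.mp ha
    rw [LinearMap.mem_ker] at h1 h2
    constructor
    · have : br a z = 0 := by rw [h1]; rfl
      rw [this]; exact zero_mem I
    · have : br z a = 0 := by
        have := congrArg (fun f => f z) h2
        simpa using this
      rw [this]; exact zero_mem I
  have hIbot : I = ⊥ := by
    rcases hsimple I hIdeal with h | h | h
    · exact h
    · exfalso
      obtain ⟨a, haann, z, haz⟩ := hbr_ne
      have ha : a ∈ I := h ▸ haann
      exact haz (by
        obtain ⟨h1, _⟩ := Submodule.mem_inf.mp ha
        rw [LinearMap.mem_ker] at h1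
        rw [h1]; rfl)
    · exfalso
      obtain ⟨a, _, z, haz⟩ := hbr_ne
      have ha : a ∈ I := h ▸ Submodule.mem_top
      exact haz (by
        obtain ⟨h1, _⟩ := Submodule.mem_inf.mp ha
        rw [LinearMap.mem_ker] at h1
        rw [h1]; rfl)
  have hinj : Function.Injective (AuxC.phi br) := by
    rw [← LinearMap.ker_eq_bot]
    rw [eq_bot_iff]
    intro x hx
    rw [LinearMap.mem_ker] at hx
    have h1 : br.flip x = 0 := congrArg (fun p => p.1.1) hx
    have h2 : br x = 0 := congrArg (fun p => p.2.1) hx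
    have : x ∈ I := Submodule.mem_inf.mpr ⟨LinearMap.mem_ker.mpr h2, LinearMap.mem_ker.mpr h1⟩
    rw [hIbot] at this
    exact this
  refine ⟨AuxC.toSpecial k L, AuxC.phi br, hinj, ?_⟩
  intro x y
  have hsub : ∀ a b : AuxC k L, a - b = (a.1 - b.1, a.2 - b.2) := fun a b => rfl
  show AuxC.phi br (br x y)
      = AuxC.phi br x * AuxC.proj0 k L (AuxC.phi br y)
        - AuxC.proj0 k L (AuxC.phi br y) * AuxC.phi br x
  rw [hsub, AuxC.mul_def, AuxC.mul_def]
  refine Prod.ext (Prod.ext ?_ ?_) (Prod.ext ?_ ?_)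
  · show br.flip (br x y)
      = (br.flip y * br.flip x) - (br.flip x * br.flip y)
    ext z
    simp only [LinearMap.sub_apply, Module.End.mul_apply, LinearMap.flip_apply]
    rw [leib z x y]; abel
  · show br.flip (br x y)
      = (br.flip y * br.flip x) - (br.flip x * br.flip y)
    ext z
    simp only [LinearMap.sub_apply, Module.End.mul_apply, LinearMap.flip_apply]
    rw [leib z x y]; abel
  · show br (br x y)
      = (br.flip y * br x + 0 * br.flip x) - (br.flip x * 0 + br x * br.flip y)
    rw [zero_mul, mul_zero, add_zero, zero_add]
    ext z
    simp only [LinearMap.sub_apply, Module.End.mul_apply, LinearMap.flip_apply]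
    rw [leib x z y]; abel
  · show br.flip (br x y)
      = (br.flip y * br.flip x + 0 * br.flip x) - (br.flip x * 0 + br.flip x * br.flip y)
    rw [zero_mul, mul_zero, add_zero, zero_add]
    ext z
    simp only [LinearMap.sub_apply, Module.End.mul_apply, LinearMap.flip_apply]
    rw [leib z x y]; abel
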